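/- Let φ: [0,1] → R be continuously differentiable and increasing with 0 < K_- ≤ φ'(x) ≤ K_+ on [0,1]. If p ∈ R^{N+1} is any vector satisfying Υ_φ^N(p_i) = φ(i/N) for all i (where Υ_φ^N is the Bernstein polynomial of φ at resolution N), then |i/N − p_i| ≤ 9K_+ / (4 K_- N^{1/2}) for every i. -/

import Mathlib

open Finset

theorem stmt17 (N : ℕ) (hN : 1 ≤ N) (φ φ' : ℝ → ℝ) (Kminus Kplus : ℝ)
    (hK : 0 < Kminus)
    (hderiv : ∀ x ∈ Set.Icc (0 : ℝ) 1, HasDerivWithinAt φ (φ' x) (Set.Icc (0 : ℝ) 1) x)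
    (hcont : ContinuousOn φ' (Set.Icc (0 : ℝ) 1))
    (hlow : ∀ x ∈ Set.Icc (0 : ℝ) 1, Kminus ≤ φ' x)
    (hup : ∀ x ∈ Set.Icc (0 : ℝ) 1, φ' x ≤ Kplus)
    (p : Fin (N+1) → ℝ) (hp : ∀ i, p i ∈ Set.Icc (0 : ℝ) 1)
    (hfix : ∀ i : Fin (N+1),
      ∑ j ∈ Finset.range (N+1),
          φ ((j : ℝ) / N) * (N.choose j : ℝ) * (p i) ^ j * (1 - p i) ^ (N - j)
        = φ (((i : ℕ) : ℝ) / N)) :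
    ∀ i : Fin (N+1),
      |((i : ℕ) : ℝ) / N - p i| ≤ 9 * Kplus / (4 * Kminus * Real.sqrt N) := by
  have hNpos : (0 : ℝ) < N := by exact_mod_cast hN
  have hKp : 0 < Kplus := lt_of_lt_of_le hK
    ((hlow 0 (by norm_num)).trans (hup 0 (by norm_num)))
  have hsN : 0 < Real.sqrt N := Real.sqrt_pos.2 hNpos
  -- Lipschitz upper bound
  have hLip : ∀ a ∈ Set.Icc (0:ℝ) 1, ∀ b ∈ Set.Icc (0:ℝ) 1,
      |φ a - φ b| ≤ Kplus * |a - b| := by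
    intro a ha b hb
    have := Convex.norm_image_sub_le_of_norm_hasDerivWithin_le hderiv
      (fun x hx => by
        rw [Real.norm_eq_abs, abs_le]
        exact ⟨by linarith [hlow x hx, hK.le], hup x hx⟩)
      (convex_Icc 0 1) hb ha
    simpa [Real.norm_eq_abs] using this
  -- Lower bound via MVT
  have hφcont : ContinuousOn φ (Set.Icc (0:ℝ) 1) :=
    fun x hx => (hderiv x hx).continuousWithinAt
  have hMVT : ∀ a ∈ Set.Icc (0:ℝ) 1, ∀ b ∈ Set.Icc (0:ℝ) 1, a ≤ b →
      Kminus * (b - a) ≤ φ b - φ a := by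
    have key := (convex_Icc (0:ℝ) 1).mul_sub_le_image_sub_of_le_deriv hφcont
      (fun x hx => by
        have hx' : Set.Icc (0:ℝ) 1 ∈ nhds x := mem_interior_iff_mem_nhds.1 hx
        exact ((hderiv x (interior_subset hx)).hasDerivAt hx').differentiableAt.differentiableWithinAt)
      (fun x hx => by
        have hx' : Set.Icc (0:ℝ) 1 ∈ nhds x := mem_interior_iff_mem_nhds.1 hx
        have hd := (hderiv x (interior_subset hx)).hasDerivAt hx'
        rw [hd.deriv]
        exact hlow x (interior_subset hx))
    exact fun a ha b hb hab => key a ha b hb hab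
  have hAbs : ∀ a ∈ Set.Icc (0:ℝ) 1, ∀ b ∈ Set.Icc (0:ℝ) 1,
      Kminus * |a - b| ≤ |φ a - φ b| := by
    intro a ha b hb
    rcases le_total a b with h | h
    · rw [abs_sub_comm a b, abs_of_nonneg (by linarith), abs_sub_comm (φ a),
        abs_of_nonneg (by linarith [hMVT a ha b hb h, mul_nonneg hK.le (sub_nonneg.2 h)])]
      exact hMVT a ha b hb h
    · rw [abs_of_nonneg (by linarith),
        abs_of_nonneg (by linarith [hMVT b hb a ha h, mul_nonneg hK.le (sub_nonneg.2 h)])]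
      exact hMVT b hb a ha h
  intro i
  set x : ℝ := p i with hxdef
  have hx : x ∈ Set.Icc (0:ℝ) 1 := hp i
  set X : unitInterval := ⟨x, hx⟩ with hXdef
  have hx0 : (0:ℝ) ≤ x := hx.1
  have hx1 : x ≤ 1 := hx.2
  -- Bernstein weights
  set b : ℕ → ℝ := fun j => (N.choose j : ℝ) * x ^ j * (1 - x) ^ (N - j) with hbdef
  have hbnn : ∀ j, 0 ≤ b j := fun j => by
    have : (0:ℝ) ≤ 1 - x := by linarith
    positivity
  have hsum1 : ∑ j ∈ Finset.range (N+1), b j = 1 := by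
    have := bernstein.probability N X
    rw [Fin.sum_univ_eq_sum_range (fun k => bernstein N k X)] at this
    simpa [bernstein_apply, hbdef] using this
  have hvar : ∑ j ∈ Finset.range (N+1), (x - (j:ℝ)/N)^2 * b j = x * (1 - x) / N := by
    rw [← Fin.sum_univ_eq_sum_range (fun j => (x - (j:ℝ)/N)^2 * b j) (N+1)]
    have := bernstein.variance (n := N) (by omega) X
    simpa [bernstein_apply, bernstein.z, hbdef, hXdef] using this
  have hiN : ((i:ℕ):ℝ)/N ∈ Set.Icc (0:ℝ) 1 := by
    constructor
    · positivity
    · rw [div_le_one hNpos]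
      exact_mod_cast Fin.is_le i
  have hjN : ∀ j ∈ Finset.range (N+1), ((j:ℝ)/N) ∈ Set.Icc (0:ℝ) 1 := by
    intro j hj
    constructor
    · positivity
    · rw [div_le_one hNpos]
      exact_mod_cast Nat.lt_succ_iff.1 (Finset.mem_range.1 hj)
  -- difference representation
  have hrep : φ (((i:ℕ):ℝ)/N) - φ x
      = ∑ j ∈ Finset.range (N+1), (φ ((j:ℝ)/N) - φ x) * b j := by
    have h1 : ∑ j ∈ Finset.range (N+1), (φ ((j:ℝ)/N) - φ x) * b j
        = (∑ j ∈ Finset.range (N+1), φ ((j:ℝ)/N) * b j)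
          - φ x * ∑ j ∈ Finset.range (N+1), b j := by
      rw [Finset.mul_sum, ← Finset.sum_sub_distrib]
      congr 1; ext j; ring
    rw [h1, hsum1, mul_one]
    congr 1
    rw [← hfix i]
    apply Finset.sum_congr rfl
    intro j _
    simp [hbdef]; ring
  -- Cauchy-Schwarz step
  have hCS : ∑ j ∈ Finset.range (N+1), |(j:ℝ)/N - x| * b j ≤ 1 / (2 * Real.sqrt N) := by
    have hsq := Finset.sum_mul_sq_le_sq_mul_sq (Finset.range (N+1))
      (fun j => |(j:ℝ)/N - x| * Real.sqrt (b j)) (fun j => Real.sqrt (b j))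
    have hfg : ∀ j : ℕ, (|(j:ℝ)/N - x| * Real.sqrt (b j)) * Real.sqrt (b j)
        = |(j:ℝ)/N - x| * b j := by
      intro j
      rw [mul_assoc, Real.mul_self_sqrt (hbnn j)]
    have hf2 : ∀ j : ℕ, (|(j:ℝ)/N - x| * Real.sqrt (b j))^2 = (x - (j:ℝ)/N)^2 * b j := by
      intro j
      rw [mul_pow, Real.sq_sqrt (hbnn j), sq_abs]
      ring_nf
    have hg2 : ∀ j, (Real.sqrt (b j))^2 = b j := fun j => Real.sq_sqrt (hbnn j)
    simp only [hfg, hf2, hg2] at hsq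
    rw [hvar, hsum1, mul_one] at hsq
    have hbound : x * (1 - x) / N ≤ 1 / (4 * N) := by
      rw [div_le_div_iff₀ hNpos (by positivity)]
      nlinarith [mul_nonneg hNpos.le (sq_nonneg (1 - 2*x))]
    have hS_nn : 0 ≤ ∑ j ∈ Finset.range (N+1), |(j:ℝ)/N - x| * b j :=
      Finset.sum_nonneg fun j _ => mul_nonneg (abs_nonneg _) (hbnn j)
    have := hsq.trans hbound
    have h2 : (∑ j ∈ Finset.range (N+1), |(j:ℝ)/N - x| * b j)^2
        ≤ (1 / (2 * Real.sqrt N))^2 := by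
      rw [div_pow, mul_pow, Real.sq_sqrt hNpos.le]
      calc _ ≤ (1:ℝ) / (4 * (N:ℝ)) := this
        _ = (1:ℝ)^2 / (2^2 * (N:ℝ)) := by norm_num
    exact (pow_le_pow_iff_left₀ hS_nn (by positivity) two_ne_zero).1 h2
  -- combine
  have hdiff : |φ (((i:ℕ):ℝ)/N) - φ x| ≤ Kplus * (1 / (2 * Real.sqrt N)) := by
    rw [hrep]
    calc |∑ j ∈ Finset.range (N+1), (φ ((j:ℝ)/N) - φ x) * b j|
        ≤ ∑ j ∈ Finset.range (N+1), |(φ ((j:ℝ)/N) - φ x) * b j| :=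
          Finset.abs_sum_le_sum_abs _ _
      _ ≤ ∑ j ∈ Finset.range (N+1), Kplus * (|(j:ℝ)/N - x| * b j) := by
          apply Finset.sum_le_sum
          intro j hj
          rw [abs_mul, abs_of_nonneg (hbnn j)]
          exact le_trans (mul_le_mul_of_nonneg_right (hLip _ (hjN j hj) x hx) (hbnn j))
            (le_of_eq (mul_assoc _ _ _))
      _ = Kplus * ∑ j ∈ Finset.range (N+1), |(j:ℝ)/N - x| * b j := by
          rw [Finset.mul_sum]
      _ ≤ Kplus * (1 / (2 * Real.sqrt N)) :=
          mul_le_mul_of_nonneg_left hCS hKp.le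
  have hlowbd : Kminus * |((i:ℕ):ℝ)/N - x| ≤ |φ (((i:ℕ):ℝ)/N) - φ x| :=
    hAbs _ hiN x hx
  have hfin : Kminus * |((i:ℕ):ℝ)/N - x| ≤ Kplus * (1 / (2 * Real.sqrt N)) :=
    hlowbd.trans hdiff
  rw [le_div_iff₀ (by positivity)]
  have habs : 0 ≤ |((i:ℕ):ℝ)/N - x| := abs_nonneg _
  have h2s : Kminus * |((i:ℕ):ℝ)/N - x| * (2 * Real.sqrt N) ≤ Kplus := by
    have := mul_le_mul_of_nonneg_right hfin (by positivity : (0:ℝ) ≤ 2 * Real.sqrt N)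
    calc Kminus * |((i:ℕ):ℝ)/N - x| * (2 * Real.sqrt N)
        ≤ Kplus * (1 / (2 * Real.sqrt N)) * (2 * Real.sqrt N) := this
      _ = Kplus := by field_simp
  nlinarith [mul_nonneg (mul_nonneg hK.le habs) hsN.le]
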